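/- arXiv:0809.5232 — 7 statements merged into one kernel-verified Lean document; each statement's English description precedes it below -/
import Mathlib

section
/- The function q(t,u) = (1 + (1-u)t + ut^2 - √(t^2(1-t)^2 u^2 - 2t(1-t^2)u + (1-t)^2))/(2t) satisfies the kernel equation t^2 u q (1-q) - u q t (1 - q t) - (1-q)(1-qt) = 0, i.e., substituting w = q(t,u) annihilates the kernel t^2 u w(1-w) - u w t(1-wt) - (1-w)(1-wt). -/
theorem stmt_4 :
    ∃ ε > (0:ℝ), ∀ t u : ℝ, |t| < ε → |u| < ε → t ≠ 0 →
      0 ≤ t^2*(1-t)^2*u^2 - 2*t*(1-t^2)*u + (1-t)^2 →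
      let q := (1 + (1-u)*t + u*t^2 -
        Real.sqrt (t^2*(1-t)^2*u^2 - 2*t*(1-t^2)*u + (1-t)^2)) / (2*t)
      t^2*u*q*(1-q) - u*q*t*(1-q*t) - (1-q)*(1-q*t) = 0 := by
  refine ⟨1, one_pos, fun t u _ _ ht hD => ?_⟩
  intro q
  have hs : Real.sqrt (t^2*(1-t)^2*u^2 - 2*t*(1-t^2)*u + (1-t)^2) ^ 2
      = t^2*(1-t)^2*u^2 - 2*t*(1-t^2)*u + (1-t)^2 := Real.sq_sqrt hD
  show t^2*u*q*(1-q) - u*q*t*(1-q*t) - (1-q)*(1-q*t) = 0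
  simp only [q]
  field_simp
  nlinarith [hs, sq_nonneg t, Real.sq_sqrt (show (0:ℝ) ≤ t * u * (t * u * (1 - t) ^ 2 - 2 * (1 - t ^ 2)) + (1 - t) ^ 2 by nlinarith [hD])]
end

section
/- PP₂(t) equals 2(t^2/(1-t) + B(t,1,1)), where B(t,u) is the bar graph generating function; i.e., (1/t)((1-3t+t^2+3t^3)/(1-t) - √((1-t)(1-3t-t^2-t^3))) = 2t^2/(1-t) + (1 - t - t(1+t) - √(t^2(1-t)^2 - 2t(1-t^2) + (1-t)^2))/t for t in a punctured neighborhood of 0 where all radicands are nonnegative. -/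
theorem stmt_6 :
    ∃ ε > (0:ℝ), ∀ t : ℝ, t ≠ 0 → |t| < ε →
      0 ≤ (1 - t)*(1 - 3*t - t^2 - t^3) →
      0 ≤ t^2*(1-t)^2 - 2*t*(1-t^2) + (1-t)^2 →
      (1/t) * ((1 - 3*t + t^2 + 3*t^3)/(1 - t) -
          Real.sqrt ((1 - t)*(1 - 3*t - t^2 - t^3))) =
        2*t^2/(1 - t) +
          (1 - t - t*(1+t) - Real.sqrt (t^2*(1-t)^2 - 2*t*(1-t^2) + (1-t)^2)) / t := by
  refine ⟨1/2, by norm_num, fun t ht hlt _ _ => ?_⟩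
  have h1 : (1:ℝ) - t ≠ 0 := by
    have := abs_lt.mp hlt; nlinarith [this.1, this.2]
  have hr : (1 - t)*(1 - 3*t - t^2 - t^3) = t^2*(1-t)^2 - 2*t*(1-t^2) + (1-t)^2 := by ring
  rw [hr]
  field_simp
  ring
end

section
/- The number σ = τ^2, where τ is the unique real root of t^5 + 2t^2 + 3t - 2, satisfies the equation u(σ) = q(σ), i.e., (1/σ)(1-√σ)/(1+√σ) = (σ^2 + 1 - √(1 - 4σ + 2σ^2 + σ^4))/(2σ), and σ ≈ 0.2441312 lies in (0, ρ) where ρ is the real root of 1-3t-t^2-t^3. -/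
theorem stmt_9 (τ σ ρ : ℝ) (hτ : τ^5 + 2*τ^2 + 3*τ - 2 = 0) (hσ : σ = τ^2)
    (hρ0 : 0 < ρ) (hρ1 : ρ < 1) (hρ : 1 - 3*ρ - ρ^2 - ρ^3 = 0) :
    (1/σ) * (1 - Real.sqrt σ) / (1 + Real.sqrt σ) =
      (σ^2 + 1 - Real.sqrt (1 - 4*σ + 2*σ^2 + σ^4)) / (2*σ) ∧
    |σ - 0.2441312| < 1e-6 ∧ 0 < σ ∧ σ < ρ := by
  have hτpos : (0:ℝ) < τ := by
    nlinarith [sq_nonneg τ, sq_nonneg (τ+1), sq_nonneg (τ^2-1), sq_nonneg (τ^2+τ), sq_nonneg (τ^2-τ)]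
  have hτlo : (0.494096:ℝ) < τ := by
    nlinarith [sq_nonneg (τ - 0.494096), sq_nonneg (τ + 1), sq_nonneg (τ^2 - 0.2441), mul_pos hτpos hτpos]
  have hτhi : τ < 0.494097 := by
    nlinarith [sq_nonneg (τ - 0.494097), sq_nonneg (τ + 1), sq_nonneg (τ^2 - 0.2441), mul_pos hτpos hτpos]
  have hσpos : 0 < σ := by rw [hσ]; positivity
  have hsq : Real.sqrt σ = τ := by rw [hσ]; exact Real.sqrt_sq hτpos.le
  have hτ1 : τ < 1 := by linarith
  have hE : Real.sqrt (1 - 4*σ + 2*σ^2 + σ^4) = (1-τ)^2*(1+τ) := by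
    have h : 1 - 4*σ + 2*σ^2 + σ^4 = ((1-τ)^2*(1+τ))^2 := by
      rw [hσ]; linear_combination (τ^3 - τ) * hτ
    rw [h]
    exact Real.sqrt_sq (by nlinarith)
  have hρlo : (0.25:ℝ) < ρ := by nlinarith [mul_pos hρ0 hρ0, mul_pos (mul_pos hρ0 hρ0) hρ0]
  refine ⟨?_, ?_, hσpos, ?_⟩
  · rw [hsq, hE]
    have h1τ : (1:ℝ) + τ ≠ 0 := by positivity
    rw [hσ]
    field_simp
    ring_nf
    nlinarith [hτ, sq_nonneg τ]
  · rw [abs_lt]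
    constructor <;> nlinarith [mul_lt_mul_of_pos_left hτlo hτpos, mul_lt_mul_of_pos_left hτhi hτpos]
  · nlinarith [mul_lt_mul_of_pos_left hτhi hτpos]
end

section
/- For all real t with 0 < t ≤ ρ, one has t·q(t)^2 ≤ 1, with equality if and only if t = ρ, where q(t) = (t^2+1-√(1-4t+2t^2+t^4))/(2t) and ρ is the unique real root of 1-3t-t^2-t^3 in (0,1). -/
theorem stmt_13 (ρ : ℝ) (hρ0 : 0 < ρ) (hρ1 : ρ < 1)
    (hρ : 1 - 3*ρ - ρ^2 - ρ^3 = 0) (t : ℝ) (ht0 : 0 < t) (htρ : t ≤ ρ) :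
    t * ((t^2 + 1 - Real.sqrt (1 - 4*t + 2*t^2 + t^4)) / (2*t))^2 ≤ 1 ∧
    (t * ((t^2 + 1 - Real.sqrt (1 - 4*t + 2*t^2 + t^4)) / (2*t))^2 = 1 ↔ t = ρ) := by
  have ht1 : t < 1 := lt_of_le_of_lt htρ hρ1
  have hc : 0 ≤ 1 - 3*t - t^2 - t^3 := by
    nlinarith [mul_nonneg (sub_nonneg.mpr htρ) (by positivity : (0:ℝ) ≤ ρ^2 + ρ*t + t^2),
      mul_nonneg (sub_nonneg.mpr htρ) (by positivity : (0:ℝ) ≤ ρ + t)]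
  have hD0 : (0:ℝ) ≤ 1 - 4*t + 2*t^2 + t^4 := by nlinarith
  set s := Real.sqrt (1 - 4*t + 2*t^2 + t^4) with hsdef
  have hs0 : 0 ≤ s := Real.sqrt_nonneg _
  have hs2 : s^2 = 1 - 4*t + 2*t^2 + t^4 := Real.sq_sqrt hD0
  set u := Real.sqrt t with hudef
  have hu0 : 0 < u := Real.sqrt_pos.mpr ht0
  have hu2 : u^2 = t := Real.sq_sqrt ht0.le
  have hB : 0 < t^2 + 1 + 2*u := by positivity
  have hA : 0 ≤ t^2 + 1 - 2*u := by nlinarith [hD0, hu2, hB]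
  have hsA : t^2 + 1 - 2*u ≤ s := by nlinarith [hs2, hu2, hA, hs0, hu0]
  have hX0 : 0 ≤ t^2 + 1 - s := by nlinarith [hs2, hs0, ht0]
  have hX2 : (t^2 + 1 - s)^2 ≤ 4*t := by nlinarith [hsA, hX0, hu2, hu0]
  have h4t : (0:ℝ) < 4*t := by linarith
  have e : t * ((t^2 + 1 - s)/(2*t))^2 = (t^2 + 1 - s)^2/(4*t) := by
    field_simp; ring
  constructor
  · rw [e]
    exact (div_le_one h4t).mpr hX2
  · constructor
    · intro h
      rw [e] at h
      have hX2e : (t^2 + 1 - s)^2 = 4*t := by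
        field_simp at h; linarith
      have hse : s * (t^2 + 1 - s) = 0 := by
        linear_combination (-(1:ℝ)/2) * hX2e - (1/2) * hs2
      have hs00 : s = 0 := by
        rcases mul_eq_zero.mp hse with h' | h'
        · exact h'
        · exfalso; nlinarith [hs2, ht0]
      have h1 : (1 - t)*(1 - 3*t - t^2 - t^3) = 0 := by
        linear_combination -hs2 + s * hs00
      have hcube : 1 - 3*t - t^2 - t^3 = 0 := by
        rcases mul_eq_zero.mp h1 with h' | h'
        · exfalso; linarith
        · exact h'
      by_contra hne
      have hlt : t < ρ := lt_of_le_of_ne htρ hne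
      nlinarith [hcube, hρ, mul_pos ht0 hρ0]
    · intro h
      subst h
      have hD : 1 - 4*t + 2*t^2 + t^4 = 0 := by linear_combination (1-t)*hρ
      have hs00 : s = 0 := by rw [hsdef, hD, Real.sqrt_zero]
      rw [e, hs00]
      rw [div_eq_one_iff_eq h4t.ne']
      linear_combination (1-t)*hρ
end

section
/- The power series q(t) = (t^2 + 1 - √(1 - 4t + 2t^2 + t^4))/(2t), expanded about t = 0, has nonnegative integer coefficients, as does the series (1-t)q(t) - 1. -/
open Finset

def aseq : ℕ → ℕ
  | 0 => 1
  | 1 => 1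
  | n+2 => (∑ i ∈ Finset.range (n+2), aseq (min i (n+1)) * aseq (n+1-i)) - aseq n
decreasing_by all_goals omega

lemma aseq_zero : aseq 0 = 1 := by rw [aseq]
lemma aseq_one : aseq 1 = 1 := by rw [aseq]

lemma aseq_two_add (n : ℕ) :
    aseq (n+2) = (∑ i ∈ Finset.range (n+2), aseq i * aseq (n+1-i)) - aseq n := by
  rw [aseq]
  congr 1
  refine Finset.sum_congr rfl fun i hi => ?_
  rw [Finset.mem_range] at hi
  rw [min_eq_left (by omega)]

lemma aseq_sum_lb (n : ℕ) :
    aseq (n+1) + aseq n ≤ ∑ i ∈ Finset.range (n+2), aseq i * aseq (n+1-i) := by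
  have h : ({0, 1} : Finset ℕ) ⊆ Finset.range (n+2) := by
    intro x hx; simp at hx; rcases hx with h | h <;> simp [h]
  calc aseq (n+1) + aseq n
      = ∑ i ∈ ({0, 1} : Finset ℕ), aseq i * aseq (n+1-i) := by
        rw [Finset.sum_pair (by norm_num)]
        simp [aseq_zero, aseq_one]
    _ ≤ _ := Finset.sum_le_sum_of_subset h

lemma aseq_rec (n : ℕ) :
    aseq (n+2) + aseq n = ∑ i ∈ Finset.range (n+2), aseq i * aseq (n+1-i) := by
  rw [aseq_two_add]
  have := aseq_sum_lb n
  omega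

lemma aseq_mono (n : ℕ) : aseq n ≤ aseq (n+1) := by
  cases n with
  | zero => rw [aseq_zero, aseq_one]
  | succ m =>
    show aseq (m+1) ≤ aseq (m+2)
    have h1 := aseq_rec m
    have h2 := aseq_sum_lb m
    omega

lemma aseq_le_catalan : ∀ n, aseq n ≤ catalan n := by
  intro n
  induction n using Nat.strong_induction_on with
  | _ n ih =>
    match n with
    | 0 => simp [aseq_zero]
    | 1 => simp [aseq_one]
    | n+2 =>
      have h1 := aseq_rec n
      have h2 : (∑ i ∈ Finset.range (n+2), aseq i * aseq (n+1-i)) ≤ catalan (n+2) := by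
        rw [show n+2 = (n+1)+1 from rfl, catalan_succ',
          Finset.Nat.sum_antidiagonal_eq_sum_range_succ (fun x y => catalan x * catalan y)]
        refine Finset.sum_le_sum fun i hi => ?_
        rw [Finset.mem_range] at hi
        exact Nat.mul_le_mul (ih i (by omega)) (ih (n+1-i) (by omega))
      omega

lemma catalan_le_four_pow (n : ℕ) : catalan n ≤ 4 ^ n := by
  have h1 : catalan n ≤ (n+1) * catalan n := Nat.le_mul_of_pos_left _ (by omega)
  rw [succ_mul_catalan_eq_centralBinom] at h1
  have h2 : Nat.centralBinom n ≤ 2 ^ (2 * n) := by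
    have h3 : (2*n).choose n ≤ ∑ i ∈ Finset.range (2*n+1), (2*n).choose i :=
      Finset.single_le_sum (fun i _ => Nat.zero_le _) (Finset.mem_range.mpr (by omega))
    rwa [Nat.sum_range_choose] at h3
  calc catalan n ≤ 2 ^ (2*n) := le_trans h1 h2
    _ = 4 ^ n := by rw [pow_mul]; norm_num

lemma aseq_le_four_pow (n : ℕ) : aseq n ≤ 4 ^ n :=
  le_trans (aseq_le_catalan n) (catalan_le_four_pow n)

def bseq : ℕ → ℕ
  | 0 => 0
  | n+1 => aseq (n+1) - aseq n

def dseq : ℕ → ℕ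
  | 0 => 0
  | n+1 => aseq n

def cseq (n : ℕ) : ℕ := ∑ k ∈ Finset.range (n+1), aseq k * aseq (n-k)

lemma cseq_eq : ∀ n, cseq n = aseq (n+1) + dseq n
  | 0 => by simp [cseq, dseq, aseq_zero, aseq_one]
  | (m+1) => by
      have h := aseq_rec m
      rw [dseq, show cseq (m+1) = ∑ i ∈ Finset.range (m+2), aseq i * aseq (m+1-i) from rfl]
      show _ = aseq (m+2) + aseq m
      omega

lemma cseq_le (n : ℕ) : cseq n ≤ 4 ^ (n+1) := by
  have h1 : cseq n ≤ catalan (n+1) := by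
    rw [catalan_succ', Finset.Nat.sum_antidiagonal_eq_sum_range_succ
      (fun x y => catalan x * catalan y), cseq]
    exact Finset.sum_le_sum fun i _ =>
      Nat.mul_le_mul (aseq_le_catalan i) (aseq_le_catalan (n-i))
  exact le_trans h1 (catalan_le_four_pow (n+1))

lemma bseq_le (n : ℕ) : bseq n ≤ 4 ^ n := by
  cases n with
  | zero => simp [bseq]
  | succ m => exact le_trans (Nat.sub_le _ _) (aseq_le_four_pow (m+1))

lemma dseq_le (n : ℕ) : dseq n ≤ 4 ^ n := by
  cases n with
  | zero => simp [dseq]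
  | succ m => exact le_trans (aseq_le_four_pow m) (Nat.pow_le_pow_right (by norm_num) (by omega))

lemma bseq_cast (n : ℕ) : ((bseq (n+1) : ℕ) : ℝ) = (aseq (n+1) : ℝ) - (aseq n : ℝ) := by
  rw [show bseq (n+1) = aseq (n+1) - aseq n from rfl, Nat.cast_sub (aseq_mono n)]

lemma summable_helper {u : ℕ → ℝ} {t C : ℝ} (hC : 0 ≤ C) (h : ∀ n, |u n| ≤ C * 4 ^ n)
    (ht : |t| < 1/8) : Summable fun n => u n * t ^ n := by
  have h4 : |4 * t| < 1 := by
    rw [abs_mul, abs_of_nonneg (by norm_num : (0:ℝ) ≤ 4)]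
    linarith [abs_nonneg t]
  refine Summable.of_norm_bounded
    ((summable_geometric_of_lt_one (abs_nonneg _) h4).mul_left C) fun n => ?_
  calc ‖u n * t ^ n‖ = |u n| * |t| ^ n := by rw [Real.norm_eq_abs, abs_mul, abs_pow]
    _ ≤ (C * 4 ^ n) * |t| ^ n :=
        mul_le_mul_of_nonneg_right (h n) (pow_nonneg (abs_nonneg t) n)
    _ = C * |4*t| ^ n := by
        rw [abs_mul, abs_of_nonneg (by norm_num : (0:ℝ) ≤ 4), mul_pow]; ring
theorem stmt_14 :
    ∃ (a b : ℕ → ℕ) (ε : ℝ), 0 < ε ∧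
      ∀ t : ℝ, t ≠ 0 → |t| < ε →
        ((t^2 + 1 - Real.sqrt (1 - 4*t + 2*t^2 + t^4)) / (2*t) =
          ∑' n : ℕ, (a n : ℝ) * t^n) ∧
        ((1 - t) * ((t^2 + 1 - Real.sqrt (1 - 4*t + 2*t^2 + t^4)) / (2*t)) - 1 =
          ∑' n : ℕ, (b n : ℝ) * t^n) := by
  refine ⟨aseq, bseq, 1/8, by norm_num, fun t ht0 ht => ?_⟩
  have htle : |t| ≤ 1 := by linarith [abs_nonneg t]
  -- summability facts
  have cast_le : ∀ (u : ℕ → ℕ) (C : ℝ), (∀ n, (u n : ℝ) ≤ C * 4 ^ n) →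
      ∀ n, |((u n : ℕ) : ℝ)| ≤ C * 4 ^ n := fun u C h n => by
    rw [abs_of_nonneg (Nat.cast_nonneg _)]; exact h n
  have haseq : ∀ n, |((aseq n : ℕ) : ℝ)| ≤ 1 * 4 ^ n := cast_le _ _ fun n => by
    rw [one_mul]; exact_mod_cast aseq_le_four_pow n
  have sA : Summable (fun n => (aseq n : ℝ) * t ^ n) :=
    summable_helper (by norm_num) haseq ht
  have sA1 : Summable (fun n => (aseq (n+1) : ℝ) * t ^ (n+1)) := by
    refine (summable_helper (C := 1) (u := fun n => (aseq (n+1) : ℝ) * t) (by norm_num)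
      (fun n => ?_) ht).congr fun n => by ring
    rw [abs_mul]
    calc |((aseq (n+1) : ℕ) : ℝ)| * |t| ≤ (4 * 4 ^ n) * (1/8) := by
          refine mul_le_mul ?_ (le_of_lt ht) (abs_nonneg t) (by positivity)
          rw [abs_of_nonneg (Nat.cast_nonneg _)]
          calc ((aseq (n+1) : ℕ) : ℝ) ≤ 4 ^ (n+1) := by exact_mod_cast aseq_le_four_pow (n+1)
            _ = 4 * 4 ^ n := by ring
      _ ≤ 1 * 4 ^ n := by have h : (0:ℝ) ≤ 4 ^ n := by positivity
                          nlinarith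
        
  have sAt : Summable (fun n => (aseq n : ℝ) * t ^ (n+1)) := by
    refine (summable_helper (C := 1) (u := fun n => (aseq n : ℝ) * t) (by norm_num)
      (fun n => ?_) ht).congr fun n => by ring
    rw [abs_mul]
    calc |((aseq n : ℕ) : ℝ)| * |t| ≤ (1 * 4 ^ n) * 1 :=
      mul_le_mul (haseq n) htle (abs_nonneg t) (by positivity)
    _ = 1 * 4 ^ n := by ring
  have sD : Summable (fun n => (dseq n : ℝ) * t ^ (n+1)) := by
    refine (summable_helper (C := 1) (u := fun n => (dseq n : ℝ) * t) (by norm_num)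
      (fun n => ?_) ht).congr fun n => by ring
    rw [abs_mul]
    calc |((dseq n : ℕ) : ℝ)| * |t| ≤ (1 * 4 ^ n) * 1 := by
          refine mul_le_mul ?_ htle (abs_nonneg t) (by positivity)
          rw [abs_of_nonneg (Nat.cast_nonneg _), one_mul]
          exact_mod_cast dseq_le n
    _ = 1 * 4 ^ n := by ring
  have sB : Summable (fun n => (bseq n : ℝ) * t ^ n) :=
    summable_helper (C := 1) (by norm_num) (cast_le _ _ fun n => by
      rw [one_mul]; exact_mod_cast bseq_le n) ht
  set F := ∑' n : ℕ, (aseq n : ℝ) * t ^ n with hFdef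
  -- Cauchy product
  have hnorm : Summable (fun n => ‖(aseq n : ℝ) * t ^ n‖) := by
    simpa [Real.norm_eq_abs, abs_mul, abs_pow, Nat.abs_cast] using sA.abs
  have hFF : F * F = ∑' n : ℕ, (cseq n : ℝ) * t ^ n := by
    rw [hFdef, tsum_mul_tsum_eq_tsum_sum_range_of_summable_norm hnorm hnorm]
    refine tsum_congr fun n => ?_
    rw [cseq]
    push_cast
    rw [Finset.sum_mul]
    refine Finset.sum_congr rfl fun k hk => ?_
    rw [Finset.mem_range] at hk
    rw [show (aseq k : ℝ) * (aseq (n-k) : ℝ) * t ^ n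
        = (aseq k : ℝ) * (aseq (n-k) : ℝ) * t ^ (k + (n-k)) from by
      congr 2; omega]
    rw [pow_add]; ring
  -- shift identities
  have e1 : ∑' n : ℕ, (aseq (n+1) : ℝ) * t ^ (n+1) = F - 1 := by
    have h := Summable.tsum_eq_zero_add sA
    rw [aseq_zero] at h
    rw [← hFdef] at h
    simp only [Nat.cast_one, pow_zero, one_mul] at h
    linarith
  have e2 : ∑' n : ℕ, (dseq n : ℝ) * t ^ (n+1) = t^2 * F := by
    rw [Summable.tsum_eq_zero_add sD]
    rw [show ((dseq 0 : ℕ) : ℝ) * t ^ (0+1) = 0 from by norm_num [dseq]]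
    rw [zero_add]
    rw [tsum_congr (fun n => show ((dseq (n+1) : ℕ) : ℝ) * t ^ (n+1+1)
        = t^2 * ((aseq n : ℝ) * t ^ n) from by
      rw [show dseq (n+1) = aseq n from rfl]; ring)]
    rw [tsum_mul_left]
  -- functional equation
  have hT : t * (F * F) = (F - 1) + t^2 * F := by
    rw [hFF, ← tsum_mul_left]
    rw [tsum_congr (fun n => show t * ((cseq n : ℝ) * t ^ n)
        = (aseq (n+1) : ℝ) * t ^ (n+1) + (dseq n : ℝ) * t ^ (n+1) from by
      rw [cseq_eq]; push_cast; ring)]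
    rw [Summable.tsum_add sA1 sD, e1, e2]
  have hq : F = 1 + t * (F * F) - t^2 * F := by linarith
  -- bound on F
  have hFle : |F| ≤ 2 := by
    have h1 : ‖F‖ ≤ ∑' n : ℕ, ‖(aseq n : ℝ) * t ^ n‖ := norm_tsum_le_tsum_norm hnorm
    have h2 : ∑' n : ℕ, ‖(aseq n : ℝ) * t ^ n‖ ≤ ∑' n : ℕ, (1/2 : ℝ) ^ n := by
      refine Summable.tsum_le_tsum (fun n => ?_) (by simpa [Real.norm_eq_abs, abs_mul, abs_pow, Nat.abs_cast] using sA.abs)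
        (summable_geometric_of_lt_one (by norm_num) (by norm_num))
      rw [Real.norm_eq_abs, abs_mul, abs_pow]
      calc |((aseq n : ℕ) : ℝ)| * |t| ^ n ≤ (1 * 4 ^ n) * (1/8 : ℝ) ^ n := by
            refine mul_le_mul (haseq n) (pow_le_pow_left₀ (abs_nonneg t) (le_of_lt ht) n)
              (by positivity) (by positivity)
        _ = (1/2 : ℝ) ^ n := by rw [one_mul, ← mul_pow]; norm_num
    have h3 : ∑' n : ℕ, (1/2 : ℝ) ^ n = 2 := by
      rw [tsum_geometric_of_lt_one (by norm_num) (by norm_num)]; norm_num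
    rw [Real.norm_eq_abs] at h1
    linarith
  -- sqrt identity
  have hge : 0 ≤ t^2 + 1 - 2*t*F := by
    have h1 : 2*t*F ≤ |2*t*F| := le_abs_self _
    have h2 : |2*t*F| ≤ 1/2 := by
      rw [abs_mul, abs_mul, abs_of_nonneg (by norm_num : (0:ℝ) ≤ 2)]
      calc 2 * |t| * |F| ≤ 2 * (1/8) * 2 := by
            refine mul_le_mul ?_ hFle (abs_nonneg F) (by norm_num)
            refine mul_le_mul le_rfl (le_of_lt ht) (abs_nonneg t) (by norm_num)
        _ = 1/2 := by norm_num
    nlinarith [sq_nonneg t]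
  have hsq : Real.sqrt (1 - 4*t + 2*t^2 + t^4) = t^2 + 1 - 2*t*F := by
    rw [show 1 - 4*t + 2*t^2 + t^4 = (t^2 + 1 - 2*t*F)^2 from by linear_combination (4*t) * hq]
    exact Real.sqrt_sq hge
  have hq1 : (t^2 + 1 - Real.sqrt (1 - 4*t + 2*t^2 + t^4)) / (2*t) = F := by
    rw [hsq]
    field_simp
    ring
  refine ⟨hq1, ?_⟩
  rw [hq1]
  -- b series
  have hB : ∑' n : ℕ, (bseq n : ℝ) * t ^ n = (F - 1) - t * F := by
    rw [Summable.tsum_eq_zero_add sB]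
    rw [show ((bseq 0 : ℕ) : ℝ) * t ^ 0 = 0 from by norm_num [bseq]]
    rw [zero_add]
    rw [tsum_congr (fun n => show ((bseq (n+1) : ℕ) : ℝ) * t ^ (n+1)
        = (aseq (n+1) : ℝ) * t ^ (n+1) - (aseq n : ℝ) * t ^ (n+1) from by
      rw [bseq_cast]; ring)]
    rw [Summable.tsum_sub sA1 sAt, e1]
    rw [tsum_congr (fun n => show (aseq n : ℝ) * t ^ (n+1) = t * ((aseq n : ℝ) * t ^ n) from by
      ring)]
    rw [tsum_mul_left]
  rw [hB]; ring
end

section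
/- The generating function of two-sided prudent polygons PP₂(t) = (1/t)((1-3t+t^2+3t^3)/(1-t) - √((1-t)(1-3t-t^2-t^3))) is algebraic over ℚ(t) of degree 2: y = PP₂(t) satisfies (ty(1-t) - (1-3t+t^2+3t^3))^2 = (1-t)^3(1-3t-t^2-t^3). -/
theorem stmt_18 :
    ∃ ε > (0:ℝ), ∀ t : ℝ, t ≠ 0 → |t| < ε →
      0 < (1 - t)*(1 - 3*t - t^2 - t^3) → t ≠ 1 →
      let y := (1/t) * ((1 - 3*t + t^2 + 3*t^3)/(1 - t) -
        Real.sqrt ((1 - t)*(1 - 3*t - t^2 - t^3)))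
      (t*y*(1 - t) - (1 - 3*t + t^2 + 3*t^3))^2 =
        (1 - t)^3 * (1 - 3*t - t^2 - t^3) := by
  refine ⟨1, one_pos, fun t ht _ hpos ht1 => ?_⟩
  intro y
  have h1 : (1 : ℝ) - t ≠ 0 := sub_ne_zero.mpr (Ne.symm ht1)
  have hy : t*y*(1 - t) - (1 - 3*t + t^2 + 3*t^3)
      = -((1 - t) * Real.sqrt ((1 - t)*(1 - 3*t - t^2 - t^3))) := by
    simp only [y]
    field_simp
    ring
  rw [hy]
  have hs := Real.sq_sqrt hpos.le
  nlinarith [hs, Real.sqrt_nonneg ((1 - t)*(1 - 3*t - t^2 - t^3))]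
end

section
/- For every t with 0 < t < σ₀ and every integer N ≥ 0, q(t)·(q(t)^2 t)^N < u(t), where u(t) = (1/t)(1-√t)/(1+√t), q(t) = (t^2+1-√(1-4t+2t^2+t^4))/(2t), and σ₀ is the unique solution in (0,ρ) of u(t) = q(t). -/
theorem stmt_19 (ρ σ₀ : ℝ) (hρ0 : 0 < ρ) (hρ1 : ρ < 1)
    (hρ : 1 - 3*ρ - ρ^2 - ρ^3 = 0)
    (u q : ℝ → ℝ)
    (hu : ∀ t : ℝ, u t = (1/t) * (1 - Real.sqrt t) / (1 + Real.sqrt t))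
    (hq : ∀ t : ℝ, q t = (t^2 + 1 - Real.sqrt (1 - 4*t + 2*t^2 + t^4)) / (2*t))
    (hσ₀ : σ₀ ∈ Set.Ioo 0 ρ) (hsol : u σ₀ = q σ₀)
    (huniq : ∀ s ∈ Set.Ioo (0:ℝ) ρ, u s = q s → s = σ₀) :
    ∀ t : ℝ, 0 < t → t < σ₀ → ∀ N : ℕ, q t * ((q t)^2 * t)^N < u t := by
  -- continuity of u - q on (0, ∞)
  have hcont : ContinuousOn (fun s : ℝ => u s - q s) (Set.Ioi 0) := by
    have heq : (fun s : ℝ => u s - q s) = fun s : ℝ =>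
        (1/s) * (1 - Real.sqrt s) / (1 + Real.sqrt s)
          - (s^2 + 1 - Real.sqrt (1 - 4*s + 2*s^2 + s^4)) / (2*s) := by
      funext s; rw [hu, hq]
    rw [heq]
    apply ContinuousOn.sub
    · apply ContinuousOn.div
      · exact (continuousOn_const.div continuousOn_id fun x hx => ne_of_gt hx).mul
          (continuous_const.sub Real.continuous_sqrt).continuousOn
      · exact (continuous_const.add Real.continuous_sqrt).continuousOn
      · intro x _
        have := Real.sqrt_nonneg x
        positivity
    · apply ContinuousOn.div
      · apply Continuous.continuousOn
        have h1 : Continuous fun s : ℝ => s^2 + 1 := by fun_prop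
        have h2 : Continuous fun s : ℝ => 1 - 4*s + 2*s^2 + s^4 := by fun_prop
        exact h1.sub (Real.continuous_sqrt.comp h2)
      · exact (continuous_const.mul continuous_id).continuousOn
      · intro x hx
        have hx' : (0:ℝ) < x := hx
        positivity
  -- q < u for small s
  have hsmall : ∀ s : ℝ, 0 < s → s ≤ 1/16 → q s < u s := by
    intro s hs hs16
    rw [hu, hq]
    have hr0 := Real.sqrt_nonneg s
    have hr2 : Real.sqrt s ≤ 1/4 := by
      have h1 : Real.sqrt s ≤ Real.sqrt (1/16) := Real.sqrt_le_sqrt hs16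
      have h2 : Real.sqrt (1/16) = 1/4 := by
        rw [show (1/16:ℝ) = (1/4)^2 by norm_num, Real.sqrt_sq (by norm_num)]
      linarith
    have hsq : Real.sqrt s ^ 2 = s := Real.sq_sqrt hs.le
    have hD0 := Real.sqrt_nonneg (1 - 4*s + 2*s^2 + s^4)
    rw [div_lt_div_iff₀ (by positivity) (by positivity)]
    have h1s : (0:ℝ) < 1 + Real.sqrt s := by linarith
    have key : 1/s * (1 - Real.sqrt s) * (2*s) = 2*(1 - Real.sqrt s) := by
      field_simp
    rw [key]
    nlinarith [hsq, hs, hr0, hr2, mul_nonneg hD0 h1s.le, sq_nonneg (Real.sqrt s)]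
  -- q < u on (0, σ₀)
  have hqu : ∀ t : ℝ, 0 < t → t < σ₀ → q t < u t := by
    intro t ht htσ
    have htρ : t < ρ := htσ.trans hσ₀.2
    rcases lt_trichotomy (q t) (u t) with h | h | h
    · exact h
    · exact absurd (huniq t ⟨ht, htρ⟩ h.symm) (ne_of_lt htσ)
    · exfalso
      set s : ℝ := min t (1/16) / 2 with hsdef
      have hs0 : 0 < s := by positivity
      have hst : s < t := by
        have : min t (1/16) ≤ t := min_le_left _ _
        simp only [hsdef]; linarith
      have hs16 : s ≤ 1/16 := by
        have : min t (1/16) ≤ 1/16 := min_le_right _ _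
        simp only [hsdef]; linarith
      have hfs : 0 < u s - q s := sub_pos.2 (hsmall s hs0 hs16)
      have hft : u t - q t < 0 := sub_neg.2 h
      have hsub : Set.Icc s t ⊆ Set.Ioi (0:ℝ) := fun x hx => lt_of_lt_of_le hs0 hx.1
      obtain ⟨c, hc, hfc⟩ := intermediate_value_Icc' hst.le (hcont.mono hsub)
        (show (0:ℝ) ∈ Set.Icc (u t - q t) (u s - q s) from ⟨hft.le, hfs.le⟩)
      have hcρ : c ∈ Set.Ioo (0:ℝ) ρ := ⟨lt_of_lt_of_le hs0 hc.1, lt_trans (lt_of_le_of_lt hc.2 htσ) hσ₀.2⟩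
      have hc2 : c = σ₀ := huniq c hcρ (by linarith [sub_eq_zero.1 hfc])
      have hc1 : c < σ₀ := lt_of_le_of_lt hc.2 htσ
      exact absurd hc2 (ne_of_lt hc1)
  -- main argument
  intro t ht htσ N
  have htρ : t < ρ := htσ.trans hσ₀.2
  have ht1 : t < 1 := htρ.trans hρ1
  -- discriminant positive
  have hD : 0 < 1 - 4*t + 2*t^2 + t^4 := by
    nlinarith [mul_pos (mul_pos (sub_pos.2 htρ) (sub_pos.2 ht1))
      (show (0:ℝ) < 3 + ρ + t + ρ^2 + ρ*t + t^2 by positivity)]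
  set r : ℝ := Real.sqrt (1 - 4*t + 2*t^2 + t^4) with hrdef
  have hrpos : 0 < r := Real.sqrt_pos.2 hD
  have hrsq : r ^ 2 = 1 - 4*t + 2*t^2 + t^4 := Real.sq_sqrt hD.le
  have hrlt : r < t^2 + 1 := by
    have h1 : r < Real.sqrt ((t^2+1)^2) := Real.sqrt_lt_sqrt hD.le (by nlinarith)
    rwa [Real.sqrt_sq (by positivity)] at h1
  have hq0 : 0 < q t := by
    rw [hq]
    exact div_pos (by linarith) (by linarith)
  have hqt1 : (q t)^2 * t < 1 := by
    rw [hq, div_pow, div_mul_eq_mul_div, div_lt_one (by positivity)]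
    nlinarith [mul_pos (mul_pos hrpos ht) (show (0:ℝ) < t^2 + 1 - r by linarith)]
  have hbound : q t * ((q t)^2 * t)^N ≤ q t := by
    exact mul_le_of_le_one_right hq0.le (pow_le_one₀ (by positivity) hqt1.le)
  exact lt_of_le_of_lt hbound (hqu t ht htσ)
end
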